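/- Let r, s, t be nonnegative integers with s ≠ t and let n ≥ max{r+t+1, r+s+1}. Then there is an isomorphism of stable translation quivers Γ^{n+3}_{r,s,t} ≅ Z T_{r,s,t}/⟨τ^{-(n+3)}⟩. -/

import Mathlib

/-!
Coloured oriented single and paired diagonals in a regular polygon, following
L. Lamberti, "Combinatorial model for the cluster categories of type E".

The vertices of the regular `m`-gon `Π` are labelled by `ZMod m` (clockwise).
A coloured oriented diagonal `[i,j]_c` is encoded by the structure `Diag`;
the colour `P` encodes a *paired* diagonal `[i,j]_P = {[i,j]_R, [j,i]_B}`.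
-/

inductive Colour : Type
  | R : Colour
  | B : Colour
  | P : Colour
deriving DecidableEq

/-- A coloured oriented (single or paired) diagonal `[i,j]_c` of the regular
`m`-gon (for `m = 0` we interpret `ZMod 0 = ℤ` as the infinite-sided polygon). -/
structure Diag (m : ℕ) where
  i : ZMod m
  j : ZMod m
  c : Colour
deriving DecidableEq

/-- The simultaneous change of colour and orientation:
`ρ([i,j]_R) = [j,i]_B`, `ρ([i,j]_B) = [j,i]_R`, `ρ([i,j]_P) = [i,j]_P`. -/
def rho {m : ℕ} : Diag m → Diag m
  | ⟨i, j, Colour.R⟩ => ⟨j, i, Colour.B⟩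
  | ⟨i, j, Colour.B⟩ => ⟨j, i, Colour.R⟩
  | ⟨i, j, Colour.P⟩ => ⟨i, j, Colour.P⟩

/-- The anticlockwise rotation `[i,j]_c ↦ [i-1,j-1]_c`. -/
def shiftD {m : ℕ} (d : Diag m) : Diag m := ⟨d.i - 1, d.j - 1, d.c⟩

/-- The slice of `Π_{r,s,t}` based at the vertex `i` of `Π`:
the paired diagonals `[i,i+2]_P, …, [i,i+r+2]_P`, the red single diagonals
`[i,i+r+3]_R, …, [i,i+r+s+2]_R` and the blue single diagonals
`[i+r+3,i]_B, …, [i+r+t+2,i]_B`. -/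
def PiSetAt (r s t : ℕ) {m : ℕ} (i : ZMod m) : Set (Diag m) :=
  {d | (∃ k : ℕ, 2 ≤ k ∧ k ≤ r + 2 ∧ d = ⟨i, i + (k : ZMod m), Colour.P⟩) ∨
       (∃ k : ℕ, r + 3 ≤ k ∧ k ≤ r + s + 2 ∧ d = ⟨i, i + (k : ZMod m), Colour.R⟩) ∨
       (∃ k : ℕ, r + 3 ≤ k ∧ k ≤ r + t + 2 ∧ d = ⟨i + (k : ZMod m), i, Colour.B⟩)}

/-- The set `Π_{r,s,t}` of coloured oriented single and paired diagonals of the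
regular `m`-gon associated to the tree `T_{r,s,t}`. -/
def PiSet (r s t m : ℕ) : Set (Diag m) := ⋃ i : ZMod m, PiSetAt r s t i

open Classical in
/-- The translation `τ` on coloured oriented diagonals: the anticlockwise
rotation `[i,j]_c ↦ [i-1,j-1]_c`, composed with `ρ^{m}` on the first slice
`Π_{r,s,t}|_1` when the tree is symmetric (`s = t`). -/
noncomputable def tauD (r s t : ℕ) {m : ℕ} (d : Diag m) : Diag m :=
  if s = t ∧ d ∈ PiSetAt r s t (1 : ZMod m) then rho^[m] (shiftD d) else shiftD d

/-- Minimal clockwise rotations (before the colour adjustment at the seam):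
`[k,l]_c → [k,l+1]_c`, `[k,l]_c → [k+1,l]_c`, together with
`[k,k+r+2]_P → [k,k+r+3]_R`, `[k,k+r+2]_P → [k+r+3,k]_B`,
`[k,k+r+3]_R → [k+1,k+r+3]_P` and `[k+r+3,k]_B → [k+1,k+r+3]_P`. -/
def Rot (r : ℕ) {m : ℕ} (a b : Diag m) : Prop :=
  b = ⟨a.i, a.j + 1, a.c⟩ ∨ b = ⟨a.i + 1, a.j, a.c⟩ ∨
  (∃ k : ZMod m, a = ⟨k, k + ((r : ZMod m) + 2), Colour.P⟩ ∧
    (b = ⟨k, k + ((r : ZMod m) + 3), Colour.R⟩ ∨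
     b = ⟨k + ((r : ZMod m) + 3), k, Colour.B⟩)) ∨
  (∃ k : ZMod m,
    (a = ⟨k, k + ((r : ZMod m) + 3), Colour.R⟩ ∨
     a = ⟨k + ((r : ZMod m) + 3), k, Colour.B⟩) ∧
    b = ⟨k + 1, k + ((r : ZMod m) + 3), Colour.P⟩)

/-- In the symmetric case `s = t` with an odd-sided polygon, the arrows whose
source lies in `τ(Π_{r,t,t}|_1)` and whose (unadjusted) target lies in the
first slice `Π_{r,t,t}|_1` additionally change colour and orientation. -/
def SeamTwist (r s t m : ℕ) (a b₀ : Diag m) : Prop :=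
  s = t ∧ Odd m ∧ a ∈ (tauD r s t) '' (PiSetAt r s t (1 : ZMod m)) ∧
    b₀ ∈ PiSetAt r s t (1 : ZMod m)

/-- The arrows of the quiver `Γ^{m}_{r,s,t}`: minimal clockwise rotations
between elements of `Π_{r,s,t}`, adjusted by `ρ` at the seam. -/
def ArrowD (r s t m : ℕ) (a b : Diag m) : Prop :=
  a ∈ PiSet r s t m ∧ b ∈ PiSet r s t m ∧
    ∃ b₀, Rot r a b₀ ∧
      ((SeamTwist r s t m a b₀ ∧ b = rho b₀) ∨ (¬ SeamTwist r s t m a b₀ ∧ b = b₀))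

/-- The vertices of the tree `T_{r,s,t}`: a central vertex together with three
legs having `r`, `s`, `t` vertices respectively. -/
inductive TVert (r s t : ℕ) : Type
  | center : TVert r s t
  | legA : Fin r → TVert r s t
  | legB : Fin s → TVert r s t
  | legC : Fin t → TVert r s t
deriving DecidableEq

/-- An orientation of the tree `T_{r,s,t}`: the `A`-leg points towards the
centre, the `B`- and `C`-legs point away from it. -/
def TArrow {r s t : ℕ} (x y : TVert r s t) : Prop :=
  (∃ k l : Fin r, (l : ℕ) + 1 = (k : ℕ) ∧ x = TVert.legA k ∧ y = TVert.legA l) ∨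
  (∃ k : Fin r, (k : ℕ) = 0 ∧ x = TVert.legA k ∧ y = TVert.center) ∨
  (∃ k : Fin s, (k : ℕ) = 0 ∧ x = TVert.center ∧ y = TVert.legB k) ∨
  (∃ k l : Fin s, (k : ℕ) + 1 = (l : ℕ) ∧ x = TVert.legB k ∧ y = TVert.legB l) ∨
  (∃ k : Fin t, (k : ℕ) = 0 ∧ x = TVert.center ∧ y = TVert.legC k) ∨
  (∃ k l : Fin t, (k : ℕ) + 1 = (l : ℕ) ∧ x = TVert.legC k ∧ y = TVert.legC l)

/-- The order-two graph automorphism of a symmetric tree `T_{r,t,t}`,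
exchanging its two legs of length `t`. -/
def treeRho {r t : ℕ} : TVert r t t → TVert r t t
  | TVert.center => TVert.center
  | TVert.legA k => TVert.legA k
  | TVert.legB k => TVert.legC k
  | TVert.legC k => TVert.legB k

/-- `treeRho` as a permutation. -/
def treeRhoPerm (r t : ℕ) : Equiv.Perm (TVert r t t) :=
  Function.Involutive.toPerm treeRho (by intro x; cases x <;> rfl)

/-- The translation of the repetitive quiver `ℤQ`: `τ(m,i) = (m-1,i)`. -/
def ZTau {V : Type} (x : ℤ × V) : ℤ × V := (x.1 - 1, x.2)

/-- The arrows of the repetitive quiver `ℤQ` of a quiver with arrow relation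
`A`: for each arrow `i → j` of `Q` there are arrows `(m,i) → (m,j)` and
`(m,j) → (m+1,i)`. -/
def ZArrow {V : Type} (A : V → V → Prop) (x y : ℤ × V) : Prop :=
  (y.1 = x.1 ∧ A x.2 y.2) ∨ (y.1 = x.1 + 1 ∧ A y.2 x.2)

/-- The automorphism `τ^{-m} σ` of `ℤQ` given by shifting `m` steps to the
right and applying the graph automorphism `σ` of `Q`. -/
def shiftPerm {V : Type} (m : ℕ) (σ : Equiv.Perm V) : Equiv.Perm (ℤ × V) :=
  (Equiv.addRight (m : ℤ)).prodCongr σ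

/-- `φ` exhibits the quiver `Γ^{m}_{r,s,t}` (with vertex set `PiSet r s t m`,
arrow relation `ArrowD` and translation `tauD`) as the quotient of the
repetitive quiver `ℤQ` (with arrow relation `ZArrow A` and translation `ZTau`)
by the cyclic group generated by the automorphism `g`, as stable translation
quivers: `φ` is surjective onto the vertex set, its fibres are exactly the
`g`-orbits, it commutes with the translations, and the arrows of
`Γ^{m}_{r,s,t}` correspond exactly to the `g`-orbits of arrows of `ℤQ`. -/
def IsQuotientIso (r s t m : ℕ) {V : Type} (A : V → V → Prop)
    (g : Equiv.Perm (ℤ × V)) (φ : ℤ × V → Diag m) : Prop :=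
  (∀ x, φ x ∈ PiSet r s t m) ∧
  (∀ d ∈ PiSet r s t m, ∃ x, φ x = d) ∧
  (∀ x y, φ x = φ y ↔ ∃ k : ℤ, (g ^ k) x = y) ∧
  (∀ x, φ (ZTau x) = tauD r s t (φ x)) ∧
  (∀ x y, ArrowD r s t m (φ x) (φ y) ↔
    ∃ y', (∃ k : ℤ, (g ^ k) y = y') ∧ ZArrow A x y')

namespace GammaAux

/-- The standard slice element of `Π_{r,s,t}` based at `i` corresponding to
the tree vertex `v`. -/
def DV (r s t : ℕ) {m : ℕ} (i : ZMod m) : TVert r s t → Diag m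
  | .center => ⟨i, i + ((r + 2 : ℕ) : ZMod m), .P⟩
  | .legA k => ⟨i, i + ((r + 1 - (k : ℕ) : ℕ) : ZMod m), .P⟩
  | .legB k => ⟨i, i + ((r + 3 + (k : ℕ) : ℕ) : ZMod m), .R⟩
  | .legC k => ⟨i + ((r + 3 + (k : ℕ) : ℕ) : ZMod m), i, .B⟩

lemma castInj {m a b : ℕ} (ha : a < m) (hb : b < m) (h : (a : ZMod m) = b) : a = b := by
  have := congrArg ZMod.val h
  rwa [ZMod.val_natCast_of_lt ha, ZMod.val_natCast_of_lt hb] at this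

lemma cancel {m : ℕ} {i : ZMod m} {a b : ℕ} (ha : a < m) (hb : b < m)
    (h : i + (a : ZMod m) = i + (b : ZMod m)) : a = b :=
  castInj ha hb (by exact add_left_cancel h)

lemma DV_mem {r s t n : ℕ} (i : ZMod (n+3)) (v : TVert r s t) :
    DV r s t i v ∈ PiSetAt r s t i := by
  cases v with
  | center => exact Or.inl ⟨r+2, by omega, by omega, rfl⟩
  | legA k => exact Or.inl ⟨r+1-(k:ℕ), by have := k.isLt; omega, by omega, rfl⟩
  | legB k => exact Or.inr (Or.inl ⟨r+3+(k:ℕ), by omega, by have := k.isLt; omega, rfl⟩)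
  | legC k => exact Or.inr (Or.inr ⟨r+3+(k:ℕ), by omega, by have := k.isLt; omega, rfl⟩)

lemma mem_decomp {r s t n : ℕ} {i : ZMod (n+3)} {d : Diag (n+3)}
    (hd : d ∈ PiSetAt r s t i) : ∃ v : TVert r s t, d = DV r s t i v := by
  rcases hd with ⟨k, hk1, hk2, rfl⟩ | ⟨k, hk1, hk2, rfl⟩ | ⟨k, hk1, hk2, rfl⟩
  · by_cases hk : k = r + 2
    · exact ⟨.center, by simp [DV, hk]⟩
    · refine ⟨.legA ⟨r+1-k, by omega⟩, ?_⟩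
      show Diag.mk i (i + ((k:ℕ) : ZMod (n+3))) Colour.P
        = Diag.mk i (i + ((r+1-(r+1-k) : ℕ) : ZMod (n+3))) Colour.P
      rw [show r+1-(r+1-k) = k from by omega]
  · refine ⟨.legB ⟨k-(r+3), by omega⟩, ?_⟩
    show Diag.mk i (i + ((k:ℕ) : ZMod (n+3))) Colour.R
      = Diag.mk i (i + ((r+3+(k-(r+3)) : ℕ) : ZMod (n+3))) Colour.R
    rw [show r+3+(k-(r+3)) = k from by omega]
  · refine ⟨.legC ⟨k-(r+3), by omega⟩, ?_⟩
    show Diag.mk (i + ((k:ℕ) : ZMod (n+3))) i Colour.B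
      = Diag.mk (i + ((r+3+(k-(r+3)) : ℕ) : ZMod (n+3))) i Colour.B
    rw [show r+3+(k-(r+3)) = k from by omega]

lemma DV_inj {r s t n : ℕ} (hs : r+s+1 ≤ n) (ht : r+t+1 ≤ n)
    {i i' : ZMod (n+3)} {v w : TVert r s t}
    (h : DV r s t i v = DV r s t i' w) : i = i' ∧ v = w := by
  cases v <;> cases w <;> simp only [DV, Diag.mk.injEq, and_true, and_false, reduceCtorEq] at h
  case center.center => exact ⟨h.1, rfl⟩
  case center.legA k =>
    obtain ⟨rfl, h2⟩ := h
    have := cancel (a := r+2) (by omega) (by have := k.isLt; omega) h2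
    have := k.isLt; omega
  case legA.center k =>
    obtain ⟨rfl, h2⟩ := h
    have := cancel (b := r+2) (by have := k.isLt; omega) (by omega) h2
    have := k.isLt; omega
  case legA.legA k l =>
    obtain ⟨rfl, h2⟩ := h
    have := cancel (a := r+1-(k:ℕ)) (b := r+1-(l:ℕ))
      (by have := k.isLt; omega) (by have := l.isLt; omega) h2
    exact ⟨rfl, by have := k.isLt; have := l.isLt; congr 1; exact Fin.ext (by omega)⟩
  case legB.legB k l =>
    obtain ⟨rfl, h2⟩ := h
    have := cancel (a := r+3+(k:ℕ)) (b := r+3+(l:ℕ))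
      (by have := k.isLt; omega) (by have := l.isLt; omega) h2
    exact ⟨rfl, by congr 1; exact Fin.ext (by omega)⟩
  case legC.legC k l =>
    obtain ⟨h2, rfl⟩ := h
    have := cancel (a := r+3+(k:ℕ)) (b := r+3+(l:ℕ))
      (by have := k.isLt; omega) (by have := l.isLt; omega) h2
    exact ⟨rfl, by congr 1; exact Fin.ext (by omega)⟩

end GammaAux
namespace GammaAux

lemma mkJ {m : ℕ} {i j j' : ZMod m} {c : Colour} (h : j = j') :
    (⟨i, j, c⟩ : Diag m) = ⟨i, j', c⟩ := by rw [h]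

lemma mkI {m : ℕ} {i i' j : ZMod m} {c : Colour} (h : i = i') :
    (⟨i, j, c⟩ : Diag m) = ⟨i', j, c⟩ := by rw [h]

lemma reduce1 {m : ℕ} {i : ZMod m} {a b : ℕ} (ha : a < m) (hb : b + 1 < m)
    (h : i + (a : ZMod m) = i + (b : ZMod m) + 1) : a = b + 1 := by
  have e : i + (a : ZMod m) = i + ((b + 1 : ℕ) : ZMod m) := by push_cast; linear_combination h
  exact cancel ha hb e

lemma rot_fwd {r s t n : ℕ} (i : ZMod (n+3)) {v w : TVert r s t} (h : TArrow v w) :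
    Rot r (DV r s t i v) (DV r s t i w) := by
  rcases h with ⟨k, l, hkl, rfl, rfl⟩ | ⟨k, hk, rfl, rfl⟩ | ⟨k, hk, rfl, rfl⟩ |
    ⟨k, l, hkl, rfl, rfl⟩ | ⟨k, hk, rfl, rfl⟩ | ⟨k, l, hkl, rfl, rfl⟩
  · -- legA k → legA l
    exact Or.inl (mkJ (by
      (try simp only [DV])
      rw [show r + 1 - (l:ℕ) = (r + 1 - (k:ℕ)) + 1 from by have := k.isLt; omega]
      push_cast; ring))
  · -- legA 0 → center
    exact Or.inl (mkJ (by
      (try simp only [DV])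
      rw [show r + 2 = (r + 1 - (k:ℕ)) + 1 from by have := k.isLt; omega]
      push_cast; ring))
  · -- center → legB 0
    exact Or.inr (Or.inr (Or.inl ⟨i, mkJ (by (try simp only [DV]); push_cast; ring),
      Or.inl (mkJ (by (try simp only [DV]); rw [hk]; push_cast; ring))⟩))
  · -- legB k → legB l
    exact Or.inl (mkJ (by
      (try simp only [DV])
      rw [show r + 3 + (l:ℕ) = (r + 3 + (k:ℕ)) + 1 from by omega]
      push_cast; ring))
  · -- center → legC 0
    exact Or.inr (Or.inr (Or.inl ⟨i, mkJ (by (try simp only [DV]); push_cast; ring),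
      Or.inr (mkI (by (try simp only [DV]); rw [hk]; push_cast; ring))⟩))
  · -- legC k → legC l
    exact Or.inr (Or.inl (mkI (by
      (try simp only [DV])
      rw [show r + 3 + (l:ℕ) = (r + 3 + (k:ℕ)) + 1 from by omega]
      push_cast; ring)))

lemma rot_bwd {r s t n : ℕ} (i : ZMod (n+3)) {v w : TVert r s t} (h : TArrow w v) :
    Rot r (DV r s t i v) (DV r s t (i+1) w) := by
  rcases h with ⟨k, l, hkl, rfl, rfl⟩ | ⟨k, hk, rfl, rfl⟩ | ⟨k, hk, rfl, rfl⟩ |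
    ⟨k, l, hkl, rfl, rfl⟩ | ⟨k, hk, rfl, rfl⟩ | ⟨k, l, hkl, rfl, rfl⟩
  · -- w = legA k, v = legA l
    refine Or.inr (Or.inl ?_)
    show (⟨i + 1, (i+1) + ((r + 1 - (k:ℕ) : ℕ) : ZMod (n+3)), Colour.P⟩ : Diag (n+3))
      = ⟨i + 1, i + ((r + 1 - (l:ℕ) : ℕ) : ZMod (n+3)), Colour.P⟩
    refine mkJ ?_
    rw [show r + 1 - (l:ℕ) = (r + 1 - (k:ℕ)) + 1 from by have := k.isLt; omega]
    push_cast; ring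
  · -- w = legA 0, v = center
    refine Or.inr (Or.inl ?_)
    show (⟨i + 1, (i+1) + ((r + 1 - (k:ℕ) : ℕ) : ZMod (n+3)), Colour.P⟩ : Diag (n+3))
      = ⟨i + 1, i + ((r + 2 : ℕ) : ZMod (n+3)), Colour.P⟩
    refine mkJ ?_
    rw [show r + 2 = (r + 1 - (k:ℕ)) + 1 from by have := k.isLt; omega]
    push_cast; ring
  · -- w = center, v = legB 0
    refine Or.inr (Or.inr (Or.inr ⟨i, Or.inl (mkJ (by (try simp only [DV]); rw [hk]; push_cast; ring)), ?_⟩))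
    show (⟨i + 1, (i+1) + ((r + 2 : ℕ) : ZMod (n+3)), Colour.P⟩ : Diag (n+3))
      = ⟨i + 1, i + ((r:ZMod (n+3)) + 3), Colour.P⟩
    refine mkJ ?_
    push_cast; ring
  · -- w = legB k, v = legB l
    refine Or.inr (Or.inl ?_)
    show (⟨i + 1, (i+1) + ((r + 3 + (k:ℕ) : ℕ) : ZMod (n+3)), Colour.R⟩ : Diag (n+3))
      = ⟨i + 1, i + ((r + 3 + (l:ℕ) : ℕ) : ZMod (n+3)), Colour.R⟩
    refine mkJ ?_
    rw [show r + 3 + (l:ℕ) = (r + 3 + (k:ℕ)) + 1 from by omega]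
    push_cast; ring
  · -- w = center, v = legC 0
    refine Or.inr (Or.inr (Or.inr ⟨i, Or.inr (mkI (by (try simp only [DV]); rw [hk]; push_cast; ring)), ?_⟩))
    show (⟨i + 1, (i+1) + ((r + 2 : ℕ) : ZMod (n+3)), Colour.P⟩ : Diag (n+3))
      = ⟨i + 1, i + ((r:ZMod (n+3)) + 3), Colour.P⟩
    refine mkJ ?_
    push_cast; ring
  · -- w = legC k, v = legC l
    refine Or.inl ?_
    show (⟨(i+1) + ((r + 3 + (k:ℕ) : ℕ) : ZMod (n+3)), i + 1, Colour.B⟩ : Diag (n+3))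
      = ⟨i + ((r + 3 + (l:ℕ) : ℕ) : ZMod (n+3)), i + 1, Colour.B⟩
    refine mkI ?_
    rw [show r + 3 + (l:ℕ) = (r + 3 + (k:ℕ)) + 1 from by omega]
    push_cast; ring

end GammaAux
namespace GammaAux

lemma cancel' {m : ℕ} {i : ZMod m} {a b : ℕ}
    (h : i + (a : ZMod m) = i + (b : ZMod m)) (ha : a < m) (hb : b < m) : a = b :=
  castInj ha hb (by exact add_left_cancel h)

lemma reduce1' {m : ℕ} {i : ZMod m} {a b : ℕ}
    (h : i + (a : ZMod m) = i + (b : ZMod m) + 1) (ha : a < m) (hb : b + 1 < m) :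
    a = b + 1 := by
  have e : i + (a : ZMod m) = i + ((b + 1 : ℕ) : ZMod m) := by push_cast; linear_combination h
  exact cancel' e ha hb

set_option maxHeartbeats 1000000 in
lemma arrow_of_rot {r s t n : ℕ} (hs : r+s+1 ≤ n) (ht : r+t+1 ≤ n)
    {i i' : ZMod (n+3)} {v w : TVert r s t}
    (h : Rot r (DV r s t i v) (DV r s t i' w)) :
    (i' = i ∧ TArrow v w) ∨ (i' = i + 1 ∧ TArrow w v) := by
  rcases h with h | h | ⟨k', ha, hb | hb⟩ | ⟨k', ha | ha, hb⟩ <;>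
    cases v <;> cases w <;>
    (try simp only [DV, Diag.mk.injEq, and_true, and_false, reduceCtorEq] at h) <;>
    (try simp only [DV, Diag.mk.injEq, and_true, and_false, reduceCtorEq] at ha) <;>
    (try simp only [DV, Diag.mk.injEq, and_true, and_false, reduceCtorEq] at hb)
  case inl.center.center =>
    obtain ⟨h1, h2⟩ := h; rw [h1] at h2
    have h3 : i + ((r+2 : ℕ) : ZMod (n+3)) = i + ((r+2 : ℕ) : ZMod (n+3)) + 1 := by
      push_cast at h2 ⊢; first | linear_combination h2 | linear_combination -h2
    have := reduce1' h3 (by omega) (by omega); omega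
  case inl.center.legA k =>
    obtain ⟨h1, h2⟩ := h; rw [h1] at h2
    have h3 : i + ((r+1-(k:ℕ) : ℕ) : ZMod (n+3)) = i + ((r+2 : ℕ) : ZMod (n+3)) + 1 := by
      push_cast at h2 ⊢; first | linear_combination h2 | linear_combination -h2
    have := reduce1' h3 (by have := k.isLt; omega) (by omega)
    have := k.isLt; omega
  case inl.legA.center k =>
    obtain ⟨h1, h2⟩ := h; rw [h1] at h2
    have h3 : i + ((r+2 : ℕ) : ZMod (n+3)) = i + ((r+1-(k:ℕ) : ℕ) : ZMod (n+3)) + 1 := by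
      push_cast at h2 ⊢; first | linear_combination h2 | linear_combination -h2
    have := reduce1' h3 (by omega) (by have := k.isLt; omega)
    exact Or.inl ⟨h1, Or.inr (Or.inl ⟨k, by have := k.isLt; omega, rfl, rfl⟩)⟩
  case inl.legA.legA k l =>
    obtain ⟨h1, h2⟩ := h; rw [h1] at h2
    have h3 : i + ((r+1-(l:ℕ) : ℕ) : ZMod (n+3)) = i + ((r+1-(k:ℕ) : ℕ) : ZMod (n+3)) + 1 := by
      push_cast at h2 ⊢; first | linear_combination h2 | linear_combination -h2
    have := reduce1' h3 (by have := l.isLt; omega) (by have := k.isLt; omega)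
    exact Or.inl ⟨h1, Or.inl ⟨k, l, by have := k.isLt; have := l.isLt; omega, rfl, rfl⟩⟩
  case inl.legB.legB k l =>
    obtain ⟨h1, h2⟩ := h; rw [h1] at h2
    have h3 : i + ((r+3+(l:ℕ) : ℕ) : ZMod (n+3)) = i + ((r+3+(k:ℕ) : ℕ) : ZMod (n+3)) + 1 := by
      push_cast at h2 ⊢; first | linear_combination h2 | linear_combination -h2
    have := reduce1' h3 (by have := l.isLt; omega) (by have := k.isLt; omega)
    exact Or.inl ⟨h1, Or.inr (Or.inr (Or.inr (Or.inl ⟨k, l, by omega, rfl, rfl⟩)))⟩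
  case inl.legC.legC k l =>
    obtain ⟨h2, h1⟩ := h; rw [h1] at h2
    have h3 : i + ((r+3+(k:ℕ) : ℕ) : ZMod (n+3)) = i + ((r+3+(l:ℕ) : ℕ) : ZMod (n+3)) + 1 := by
      push_cast at h2 ⊢; first | linear_combination h2 | linear_combination -h2
    have := reduce1' h3 (by have := k.isLt; omega) (by have := l.isLt; omega)
    exact Or.inr ⟨h1, Or.inr (Or.inr (Or.inr (Or.inr (Or.inr ⟨l, k, by omega, rfl, rfl⟩))))⟩
  case inr.inl.center.center =>
    obtain ⟨h1, h2⟩ := h; rw [h1] at h2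
    have h3 : i + ((r+2 : ℕ) : ZMod (n+3)) = i + ((r+2 : ℕ) : ZMod (n+3)) + 1 := by
      push_cast at h2 ⊢; first | linear_combination h2 | linear_combination -h2
    have := reduce1' h3 (by omega) (by omega); omega
  case inr.inl.center.legA k =>
    obtain ⟨h1, h2⟩ := h; rw [h1] at h2
    have h3 : i + ((r+2 : ℕ) : ZMod (n+3)) = i + ((r+1-(k:ℕ) : ℕ) : ZMod (n+3)) + 1 := by
      push_cast at h2 ⊢; first | linear_combination h2 | linear_combination -h2
    have := reduce1' h3 (by omega) (by have := k.isLt; omega)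
    exact Or.inr ⟨h1, Or.inr (Or.inl ⟨k, by have := k.isLt; omega, rfl, rfl⟩)⟩
  case inr.inl.legA.center k =>
    obtain ⟨h1, h2⟩ := h; rw [h1] at h2
    have h3 : i + ((r+1-(k:ℕ) : ℕ) : ZMod (n+3)) = i + ((r+2 : ℕ) : ZMod (n+3)) + 1 := by
      push_cast at h2 ⊢; first | linear_combination h2 | linear_combination -h2
    have := reduce1' h3 (by have := k.isLt; omega) (by omega)
    have := k.isLt; omega
  case inr.inl.legA.legA k l =>
    obtain ⟨h1, h2⟩ := h; rw [h1] at h2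
    have h3 : i + ((r+1-(k:ℕ) : ℕ) : ZMod (n+3)) = i + ((r+1-(l:ℕ) : ℕ) : ZMod (n+3)) + 1 := by
      push_cast at h2 ⊢; first | linear_combination h2 | linear_combination -h2
    have := reduce1' h3 (by have := k.isLt; omega) (by have := l.isLt; omega)
    exact Or.inr ⟨h1, Or.inl ⟨l, k, by have := k.isLt; have := l.isLt; omega, rfl, rfl⟩⟩
  case inr.inl.legB.legB k l =>
    obtain ⟨h1, h2⟩ := h; rw [h1] at h2
    have h3 : i + ((r+3+(k:ℕ) : ℕ) : ZMod (n+3)) = i + ((r+3+(l:ℕ) : ℕ) : ZMod (n+3)) + 1 := by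
      push_cast at h2 ⊢; first | linear_combination h2 | linear_combination -h2
    have := reduce1' h3 (by have := k.isLt; omega) (by have := l.isLt; omega)
    exact Or.inr ⟨h1, Or.inr (Or.inr (Or.inr (Or.inl ⟨l, k, by omega, rfl, rfl⟩)))⟩
  case inr.inl.legC.legC k l =>
    obtain ⟨h2, h1⟩ := h; rw [h1] at h2
    have h3 : i + ((r+3+(l:ℕ) : ℕ) : ZMod (n+3)) = i + ((r+3+(k:ℕ) : ℕ) : ZMod (n+3)) + 1 := by
      push_cast at h2 ⊢; first | linear_combination h2 | linear_combination -h2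
    have := reduce1' h3 (by have := l.isLt; omega) (by have := k.isLt; omega)
    exact Or.inl ⟨h1, Or.inr (Or.inr (Or.inr (Or.inr (Or.inr ⟨k, l, by omega, rfl, rfl⟩))))⟩
  case inr.inr.inl.inl.center.legB l =>
    obtain ⟨h1, -⟩ := ha
    rw [← h1] at hb
    obtain ⟨hb1, hb2⟩ := hb; rw [hb1] at hb2
    have h3 : i + ((r+3+(l:ℕ) : ℕ) : ZMod (n+3)) = i + ((r+3 : ℕ) : ZMod (n+3)) := by
      push_cast at hb2 ⊢; first | linear_combination hb2 | linear_combination -hb2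
    have := cancel' h3 (by have := l.isLt; omega) (by omega)
    exact Or.inl ⟨hb1, Or.inr (Or.inr (Or.inl ⟨l, by omega, rfl, rfl⟩))⟩
  case inr.inr.inl.inl.legA.legB k l =>
    obtain ⟨h1, ha2⟩ := ha
    rw [← h1] at ha2
    have h3 : i + ((r+1-(k:ℕ) : ℕ) : ZMod (n+3)) = i + ((r+2 : ℕ) : ZMod (n+3)) := by
      push_cast at ha2 ⊢; first | linear_combination ha2 | linear_combination -ha2
    have := cancel' h3 (by have := k.isLt; omega) (by omega)
    have := k.isLt; omega
  case inr.inr.inl.inr.center.legC l =>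
    obtain ⟨h1, -⟩ := ha
    rw [← h1] at hb
    obtain ⟨hb2, hb1⟩ := hb; rw [hb1] at hb2
    have h3 : i + ((r+3+(l:ℕ) : ℕ) : ZMod (n+3)) = i + ((r+3 : ℕ) : ZMod (n+3)) := by
      push_cast at hb2 ⊢; first | linear_combination hb2 | linear_combination -hb2
    have := cancel' h3 (by have := l.isLt; omega) (by omega)
    exact Or.inl ⟨hb1, Or.inr (Or.inr (Or.inr (Or.inr (Or.inl ⟨l, by omega, rfl, rfl⟩))))⟩
  case inr.inr.inl.inr.legA.legC k l =>
    obtain ⟨h1, ha2⟩ := ha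
    rw [← h1] at ha2
    have h3 : i + ((r+1-(k:ℕ) : ℕ) : ZMod (n+3)) = i + ((r+2 : ℕ) : ZMod (n+3)) := by
      push_cast at ha2 ⊢; first | linear_combination ha2 | linear_combination -ha2
    have := cancel' h3 (by have := k.isLt; omega) (by omega)
    have := k.isLt; omega
  case inr.inr.inr.inl.legB.center k =>
    obtain ⟨h1, ha2⟩ := ha
    rw [← h1] at ha2 hb
    have h3 : i + ((r+3+(k:ℕ) : ℕ) : ZMod (n+3)) = i + ((r+3 : ℕ) : ZMod (n+3)) := by
      push_cast at ha2 ⊢; first | linear_combination ha2 | linear_combination -ha2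
    have := cancel' h3 (by have := k.isLt; omega) (by omega)
    exact Or.inr ⟨hb.1, Or.inr (Or.inr (Or.inl ⟨k, by omega, rfl, rfl⟩))⟩
  case inr.inr.inr.inl.legB.legA k l =>
    obtain ⟨h1, -⟩ := ha
    rw [← h1] at hb
    obtain ⟨hb1, hb2⟩ := hb; rw [hb1] at hb2
    have h3 : (i+1) + ((r+1-(l:ℕ) : ℕ) : ZMod (n+3)) = (i+1) + ((r+2 : ℕ) : ZMod (n+3)) := by
      push_cast at hb2 ⊢; first | linear_combination hb2 | linear_combination -hb2
    have := cancel' h3 (by have := l.isLt; omega) (by omega)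
    have := l.isLt; omega
  case inr.inr.inr.inr.legC.center k =>
    obtain ⟨ha2, h1⟩ := ha
    rw [← h1] at ha2 hb
    have h3 : i + ((r+3+(k:ℕ) : ℕ) : ZMod (n+3)) = i + ((r+3 : ℕ) : ZMod (n+3)) := by
      push_cast at ha2 ⊢; first | linear_combination ha2 | linear_combination -ha2
    have := cancel' h3 (by have := k.isLt; omega) (by omega)
    exact Or.inr ⟨hb.1, Or.inr (Or.inr (Or.inr (Or.inr (Or.inl ⟨k, by omega, rfl, rfl⟩))))⟩
  case inr.inr.inr.inr.legC.legA k l =>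
    obtain ⟨ha2, h1⟩ := ha
    rw [← h1] at hb
    obtain ⟨hb1, hb2⟩ := hb; rw [hb1] at hb2
    have h3 : (i+1) + ((r+1-(l:ℕ) : ℕ) : ZMod (n+3)) = (i+1) + ((r+2 : ℕ) : ZMod (n+3)) := by
      push_cast at hb2 ⊢; first | linear_combination hb2 | linear_combination -hb2
    have := cancel' h3 (by have := l.isLt; omega) (by omega)
    have := l.isLt; omega

end GammaAux
namespace GammaAux

lemma shiftPerm_zpow {V : Type} (m : ℕ) (k : ℤ) :
    ∀ x : ℤ × V, ((shiftPerm m (Equiv.refl V)) ^ k) x = (x.1 + k * (m:ℤ), x.2) := by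
  induction k using Int.induction_on with
  | zero => intro x; simp
  | succ j ih =>
      intro x
      rw [zpow_add, zpow_one, Equiv.Perm.mul_apply]
      rw [show (shiftPerm m (Equiv.refl V)) x = (x.1 + (m:ℤ), x.2) from rfl, ih]
      refine Prod.ext ?_ rfl
      push_cast; ring
  | pred j ih =>
      intro x
      rw [show (-(j:ℤ) - 1) = (-(j:ℤ)) + (-1) from by ring, zpow_add,
        Equiv.Perm.mul_apply]
      rw [show ((shiftPerm m (Equiv.refl V)) ^ (-1 : ℤ)) x = (x.1 - (m:ℤ), x.2) from rfl, ih]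
      refine Prod.ext ?_ rfl
      push_cast; ring

lemma cast_shift {n : ℕ} {p q : ℤ} (h : (p : ZMod (n+3)) = (q : ZMod (n+3))) :
    ∃ k : ℤ, p + k * (((n:ℕ)+3 : ℕ):ℤ) = q := by
  have h2 := (ZMod.intCast_eq_intCast_iff _ _ _).1 h
  obtain ⟨c, hc⟩ := Int.ModEq.dvd h2
  refine ⟨c, ?_⟩
  push_cast at hc ⊢
  linarith

lemma cast_add_mul {n : ℕ} (p k : ℤ) :
    ((p + k * (((n:ℕ)+3 : ℕ):ℤ) : ℤ) : ZMod (n+3)) = (p : ZMod (n+3)) := by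
  have z : (((n:ℕ)+3 : ℕ) : ZMod (n+3)) = 0 := ZMod.natCast_self _
  push_cast at z ⊢
  rw [z]; ring

lemma tauD_eq {r s t m : ℕ} (hst : s ≠ t) (d : Diag m) : tauD r s t d = shiftD d := by
  rw [tauD, if_neg]
  rintro ⟨h1, -⟩
  exact hst h1

lemma shiftD_DV {r s t n : ℕ} (i : ZMod (n+3)) (v : TVert r s t) :
    shiftD (DV r s t i v) = DV r s t (i - 1) v := by
  cases v <;> simp only [DV, shiftD, Diag.mk.injEq, and_true, true_and] <;>
    ring

lemma arrowD_iff {r s t m : ℕ} (hst : s ≠ t) {a b : Diag m} :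
    ArrowD r s t m a b ↔ a ∈ PiSet r s t m ∧ b ∈ PiSet r s t m ∧ Rot r a b := by
  constructor
  · rintro ⟨h1, h2, b₀, hrot, (⟨⟨hst', -⟩, -⟩ | ⟨-, rfl⟩)⟩
    · exact absurd hst' hst
    · exact ⟨h1, h2, hrot⟩
  · rintro ⟨h1, h2, hrot⟩
    exact ⟨h1, h2, b, hrot, Or.inr ⟨fun hc => hst hc.1, rfl⟩⟩

end GammaAux

open GammaAux in
/-- Theorem 4.2, asymmetric case. Let `r, s, t` be
nonnegative integers with `s ≠ t` and let `n ≥ max {r+t+1, r+s+1}`. Then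
there is an isomorphism of stable translation quivers
`Γ^{n+3}_{r,s,t} ≅ ℤ T_{r,s,t} / ⟨τ^{-(n+3)}⟩`. -/
theorem gamma_iso_ZT_quotient (r s t n : ℕ) (hst : s ≠ t)
    (hn : max (r + t + 1) (r + s + 1) ≤ n) :
    ∃ φ : ℤ × TVert r s t → Diag (n + 3),
      IsQuotientIso r s t (n + 3) TArrow
        (shiftPerm (n + 3) (Equiv.refl (TVert r s t))) φ := by
  have hs : r + s + 1 ≤ n := le_trans (le_max_right _ _) hn
  have ht : r + t + 1 ≤ n := le_trans (le_max_left _ _) hn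
  refine ⟨fun x => DV r s t ((x.1 : ZMod (n+3))) x.2, ?_, ?_, ?_, ?_, ?_⟩
  · -- membership
    intro x
    exact Set.mem_iUnion.2 ⟨_, DV_mem _ _⟩
  · -- surjectivity
    intro d hd
    obtain ⟨i, hi⟩ := Set.mem_iUnion.1 hd
    obtain ⟨v, rfl⟩ := mem_decomp hi
    refine ⟨(((i.val : ℕ) : ℤ), v), ?_⟩
    show DV r s t ((((i.val : ℕ) : ℤ) : ZMod (n+3))) v = DV r s t i v
    rw [show ((((i.val : ℕ) : ℤ)) : ZMod (n+3)) = ((i.val : ℕ) : ZMod (n+3)) from by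
      push_cast; rfl, ZMod.natCast_val, ZMod.cast_id]
  · -- fibres
    intro x y
    constructor
    · intro h
      obtain ⟨hcast, hv⟩ := DV_inj hs ht h
      obtain ⟨k, hk⟩ := cast_shift hcast
      refine ⟨k, ?_⟩
      rw [shiftPerm_zpow]
      exact Prod.ext hk hv
    · rintro ⟨k, rfl⟩
      rw [shiftPerm_zpow]
      show DV r s t ((x.1 : ZMod (n+3))) x.2
        = DV r s t (((x.1 + k * (((n:ℕ)+3 : ℕ) : ℤ) : ℤ) : ZMod (n+3))) x.2
      rw [cast_add_mul]
  · -- translation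
    intro x
    rw [tauD_eq hst, shiftD_DV]
    show DV r s t (((x.1 - 1 : ℤ) : ZMod (n+3))) x.2 = _
    rw [show ((x.1 - 1 : ℤ) : ZMod (n+3)) = ((x.1 : ℤ) : ZMod (n+3)) - 1 from by push_cast; ring]
  · -- arrows
    intro x y
    rw [arrowD_iff hst]
    constructor
    · rintro ⟨-, -, hrot⟩
      rcases arrow_of_rot hs ht hrot with ⟨hi, ha⟩ | ⟨hi, ha⟩
      · obtain ⟨k, hk⟩ := cast_shift hi
        refine ⟨(x.1, y.2), ⟨k, ?_⟩, Or.inl ⟨rfl, ha⟩⟩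
        rw [shiftPerm_zpow]
        exact Prod.ext hk rfl
      · obtain ⟨k, hk⟩ := cast_shift (p := y.1) (q := x.1 + 1)
          (by rw [hi]; push_cast; ring)
        refine ⟨(x.1 + 1, y.2), ⟨k, ?_⟩, Or.inr ⟨rfl, ha⟩⟩
        rw [shiftPerm_zpow]
        exact Prod.ext hk rfl
    · rintro ⟨y', ⟨k, rfl⟩, hz⟩
      refine ⟨Set.mem_iUnion.2 ⟨_, DV_mem _ _⟩, Set.mem_iUnion.2 ⟨_, DV_mem _ _⟩, ?_⟩
      rw [shiftPerm_zpow] at hz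
      rcases hz with ⟨h1, ha⟩ | ⟨h1, ha⟩
      · replace h1 : y.1 + k * ((n:ℕ)+3 : ℤ) = x.1 := h1
        replace ha : TArrow x.2 y.2 := ha
        have e : ((y.1 : ℤ) : ZMod (n+3)) = ((x.1 : ℤ) : ZMod (n+3)) := by
          rw [← h1, show ((n:ℕ)+3 : ℤ) = (((n:ℕ)+3 : ℕ) : ℤ) from by push_cast; ring,
            cast_add_mul]
        show Rot r (DV r s t ((x.1 : ZMod (n+3))) x.2) (DV r s t ((y.1 : ZMod (n+3))) y.2)
        rw [e]
        exact rot_fwd _ ha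
      · replace h1 : y.1 + k * ((n:ℕ)+3 : ℤ) = x.1 + 1 := h1
        replace ha : TArrow y.2 x.2 := ha
        have e : ((y.1 : ℤ) : ZMod (n+3)) = ((x.1 : ℤ) : ZMod (n+3)) + 1 := by
          have e2 : ((y.1 : ℤ) : ZMod (n+3)) = (((x.1 + 1 : ℤ)) : ZMod (n+3)) := by
            rw [← h1, show ((n:ℕ)+3 : ℤ) = (((n:ℕ)+3 : ℕ) : ℤ) from by push_cast; ring,
              cast_add_mul]
          rw [e2]; push_cast; ring
        show Rot r (DV r s t ((x.1 : ZMod (n+3))) x.2) (DV r s t ((y.1 : ZMod (n+3))) y.2)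
        rw [e]
        exact rot_bwd _ ha
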